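/- For Schwartz functions f, g on R^{2N}, the Moyal product f ⋆_θ g, defined by (f ⋆_θ g)(x) = (πθ)^{-2N} ∬ f(y) g(z) e^{(2i/θ)(x−y)·S(x−z)} dy dz with S the standard symplectic matrix, is again a Schwartz function. -/

import Mathlib

open MeasureTheory Complex

noncomputable section

/-- Euclidean dot product on `Fin n → ℝ`. -/
def dotR {n : ℕ} (x y : Fin n → ℝ) : ℝ := ∑ i, x i * y i

/-- The standard symplectic matrix `S = [[0, 1_N], [-1_N, 0]]` applied to a vector:
`(S x)_j = x_{j+N}` for `j < N` and `(S x)_j = -x_{j-N}` for `j ≥ N`. -/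
def symp (N : ℕ) (x : Fin (2 * N) → ℝ) : Fin (2 * N) → ℝ := fun j =>
  if _h : (j : ℕ) < N then x ⟨(j : ℕ) + N, by omega⟩
  else -x ⟨(j : ℕ) - N, by have := j.isLt; omega⟩

/-- The Moyal product
`(f ⋆_θ g)(x) = (πθ)^{-2N} ∬ f(y) g(z) e^{(2i/θ)(x−y)·S(x−z)} dy dz`. -/
def moyal (N : ℕ) (θ : ℝ) (f g : (Fin (2 * N) → ℝ) → ℂ) (x : Fin (2 * N) → ℝ) : ℂ :=
  (((Real.pi * θ) ^ (2 * N))⁻¹ : ℝ) *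
    ∫ y : Fin (2 * N) → ℝ, ∫ z : Fin (2 * N) → ℝ,
      f y * g z *
        Complex.exp (2 * Complex.I / (θ : ℂ) * ((dotR (x - y) (symp N (x - z)) : ℝ) : ℂ))

open SchwartzMap
open scoped Nat ContDiff FourierTransform RealInnerProductSpace

namespace Moyal


variable {N : ℕ}

def iLo (N : ℕ) (j : Fin N) : Fin (2 * N) := ⟨j, by omega⟩
def iHi (N : ℕ) (j : Fin N) : Fin (2 * N) := ⟨(j : ℕ) + N, by omega⟩

lemma symp_iLo (b : Fin (2*N) → ℝ) (j : Fin N) : symp N b (iLo N j) = b (iHi N j) := by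
  simp only [symp, iLo, iHi]
  exact dif_pos j.isLt

lemma symp_iHi (b : Fin (2*N) → ℝ) (j : Fin N) : symp N b (iHi N j) = - b (iLo N j) := by
  simp only [symp, iLo, iHi]
  refine (dif_neg (show ¬ ((j:ℕ) + N < N) by omega)).trans ?_
  simp [iLo, Nat.add_sub_cancel]

lemma dotR_symp (a b : Fin (2*N) → ℝ) :
    dotR a (symp N b) =
      ∑ j : Fin N, (a (iLo N j) * b (iHi N j) - a (iHi N j) * b (iLo N j)) := by
  have h2 : 2 * N = N + N := by ring
  rw [dotR, ← (finCongr h2.symm).sum_comp (fun i => a i * symp N b i), Fin.sum_univ_add]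
  have e1 : ∀ j : Fin N, finCongr h2.symm (Fin.castAdd N j) = iLo N j := by
    intro j; ext; simp [iLo]
  have e2 : ∀ j : Fin N, finCongr h2.symm (Fin.natAdd N j) = iHi N j := by
    intro j; ext; simp [iHi]
  simp_rw [e1, e2, symp_iLo, symp_iHi, Finset.sum_sub_distrib, mul_neg,
    Finset.sum_neg_distrib, ← sub_eq_add_neg]

lemma dotR_symp_self (a : Fin (2*N) → ℝ) : dotR a (symp N a) = 0 := by
  rw [dotR_symp]; apply Finset.sum_eq_zero; intro j _; ring

lemma dotR_symp_comm (a b : Fin (2*N) → ℝ) : dotR a (symp N b) = - dotR b (symp N a) := by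
  rw [dotR_symp, dotR_symp, ← Finset.sum_neg_distrib]
  congr 1; funext j; ring

lemma symp_sub (x z : Fin (2*N) → ℝ) : symp N (x - z) = symp N x - symp N z := by
  funext j
  simp only [symp, Pi.sub_apply]
  split <;> ring

lemma dotR_sub_left (x y v : Fin (2*N) → ℝ) : dotR (x - y) v = dotR x v - dotR y v := by
  simp [dotR, sub_mul, Finset.sum_sub_distrib]

lemma dotR_sub_right (u v w : Fin (2*N) → ℝ) : dotR u (v - w) = dotR u v - dotR u w := by
  simp [dotR, mul_sub, Finset.sum_sub_distrib]

lemma dot_expand (x y z : Fin (2*N) → ℝ) :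
    dotR (x - y) (symp N (x - z)) =
      dotR y (symp N z) - dotR y (symp N x) + dotR z (symp N x) := by
  rw [symp_sub, dotR_sub_left, dotR_sub_right, dotR_sub_right,
    dotR_symp_self, dotR_symp_comm x z]
  ring



lemma hasDerivAt_expI (t : ℝ) :
    HasDerivAt (fun s : ℝ => Complex.exp (Complex.I * s)) (Complex.I * Complex.exp (Complex.I * t)) t := by
  have h1 : HasDerivAt (fun s : ℝ => (Complex.I * s : ℂ)) Complex.I t := by
    simpa using (Complex.ofRealCLM.hasDerivAt (x := t)).const_mul Complex.I
  simpa [mul_comm] using h1.cexp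

lemma iteratedDeriv_expI (n : ℕ) :
    iteratedDeriv n (fun s : ℝ => Complex.exp (Complex.I * s)) =
      fun s : ℝ => Complex.I ^ n * Complex.exp (Complex.I * s) := by
  induction n with
  | zero => simp
  | succ n ih =>
    rw [iteratedDeriv_succ, ih]
    funext t
    have : HasDerivAt (fun s : ℝ => Complex.I ^ n * Complex.exp (Complex.I * s))
        (Complex.I ^ n * (Complex.I * Complex.exp (Complex.I * t))) t :=
      (hasDerivAt_expI t).const_mul _
    rw [this.deriv]
    ring

lemma contDiff_expI : ContDiff ℝ ∞ (fun s : ℝ => Complex.exp (Complex.I * s)) :=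
  Complex.contDiff_exp.comp (contDiff_const.mul Complex.ofRealCLM.contDiff)

lemma norm_iteratedFDeriv_expI (n : ℕ) (t : ℝ) :
    ‖iteratedFDeriv ℝ n (fun s : ℝ => Complex.exp (Complex.I * s)) t‖ = 1 := by
  rw [norm_iteratedFDeriv_eq_norm_iteratedDeriv, iteratedDeriv_expI]
  simp [Complex.norm_exp]

/-- `exp(I ψ)` has temperate growth whenever `ψ : E → ℝ` does. -/
lemma Function.HasTemperateGrowth.expI {E : Type*} [NormedAddCommGroup E] [NormedSpace ℝ E]
    {ψ : E → ℝ} (hψ : _root_.Function.HasTemperateGrowth ψ) :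
    _root_.Function.HasTemperateGrowth (fun x => Complex.exp (Complex.I * ψ x)) := by
  constructor
  · exact contDiff_expI.comp hψ.1
  · intro n
    obtain ⟨k, C, hC0, hC⟩ := hψ.norm_iteratedFDeriv_le_uniform n
    refine ⟨k * n, n ! * (1 + C) ^ n, fun x => ?_⟩
    have key := norm_iteratedFDeriv_comp_le (g := fun s : ℝ => Complex.exp (Complex.I * s))
      (f := ψ) (n := n) contDiff_expI hψ.1 (by exact_mod_cast le_top) x (C := 1)
      (D := (1 + C) * (1 + ‖x‖) ^ k) ?_ ?_
    · have heq : (fun s : ℝ => Complex.exp (Complex.I * s)) ∘ ψ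
          = fun x => Complex.exp (Complex.I * ψ x) := rfl
      rw [heq] at key
      refine key.trans (le_of_eq ?_)
      rw [mul_pow, ← pow_mul]
      ring
    · intro i _
      exact (norm_iteratedFDeriv_expI i (ψ x)).le
    · intro i hi1 hin
      have hD1 : (1 : ℝ) ≤ (1 + C) * (1 + ‖x‖) ^ k := by
        have : (1:ℝ) ≤ (1 + ‖x‖) ^ k := one_le_pow₀ (by linarith [norm_nonneg x])
        nlinarith [norm_nonneg x, hC0]
      calc ‖iteratedFDeriv ℝ i ψ x‖ ≤ C * (1 + ‖x‖) ^ k := hC i hin x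
        _ ≤ (1 + C) * (1 + ‖x‖) ^ k := by
            have : (0:ℝ) ≤ (1 + ‖x‖) ^ k := by positivity
            nlinarith
        _ ≤ ((1 + C) * (1 + ‖x‖) ^ k) ^ i := le_self_pow₀ hD1 (by omega)

/-- a quadratic form `x ↦ B x x` has temperate growth. -/
lemma htg_bilin_diag {E : Type*} [NormedAddCommGroup E] [NormedSpace ℝ E]
    (B : E →L[ℝ] E →L[ℝ] ℝ) :
    Function.HasTemperateGrowth (fun x => B x x) := by
  have hfd : ∀ x : E, HasFDerivAt (fun x => B x x) ((B + B.flip) x) x := by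
    intro x
    have hdiag : HasFDerivAt (fun y : E => (y, y))
        ((ContinuousLinearMap.id ℝ E).prod (ContinuousLinearMap.id ℝ E)) x :=
      ((ContinuousLinearMap.id ℝ E).prod (ContinuousLinearMap.id ℝ E)).hasFDerivAt
    have hb : HasFDerivAt (fun p : E × E => B p.1 p.2)
        (B.isBoundedBilinearMap.deriv (x, x)) (x, x) :=
      B.isBoundedBilinearMap.hasFDerivAt (x, x)
    have h := HasFDerivAt.comp (g := fun p : E × E => B p.1 p.2)
      (f := fun y : E => (y, y)) x hb hdiag
    refine h.congr_fderiv ?_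
    ext v
    simp
  refine Function.HasTemperateGrowth.of_fderiv ?_ (fun x => (hfd x).differentiableAt)
    (k := 2) (C := ‖B‖) (fun x => ?_)
  · have : (fderiv ℝ fun x => B x x) = fun x => (B + B.flip) x := by
      funext x; exact (hfd x).fderiv
    rw [this]
    exact (B + B.flip).hasTemperateGrowth
  · calc ‖B x x‖ ≤ ‖B x‖ * ‖x‖ := (B x).le_opNorm x
      _ ≤ ‖B‖ * ‖x‖ * ‖x‖ := by
          have := B.le_opNorm x
          have h0 := norm_nonneg x
          nlinarith [norm_nonneg (B x)]
      _ ≤ ‖B‖ * (1 + ‖x‖) ^ 2 := by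
          have h0 := norm_nonneg x
          have hB := norm_nonneg B
          nlinarith



variable (N : ℕ)

abbrev Dm := Fin (2 * N) → ℝ
abbrev Wsp := EuclideanSpace ℝ (Fin (2 * N) ⊕ Fin (2 * N))

def p1 : Wsp N →L[ℝ] Dm N :=
  LinearMap.toContinuousLinearMap
    { toFun := fun w j => w (Sum.inl j)
      map_add' := fun _ _ => rfl
      map_smul' := fun _ _ => rfl }

def p2 : Wsp N →L[ℝ] Dm N :=
  LinearMap.toContinuousLinearMap
    { toFun := fun w j => w (Sum.inr j)
      map_add' := fun _ _ => rfl
      map_smul' := fun _ _ => rfl }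

@[simp] lemma p1_apply (w : Wsp N) (j : Fin (2*N)) : p1 N w j = w (Sum.inl j) := rfl
@[simp] lemma p2_apply (w : Wsp N) (j : Fin (2*N)) : p2 N w j = w (Sum.inr j) := rfl

lemma euclid_coord_le {ι : Type*} [Fintype ι] (w : EuclideanSpace ℝ ι) (i : ι) :
    ‖w i‖ ≤ ‖w‖ := by
  rw [EuclideanSpace.norm_eq, Real.norm_eq_abs, ← Real.sqrt_sq_eq_abs]
  apply Real.sqrt_le_sqrt
  have := Finset.single_le_sum (f := fun i => ‖w i‖ ^ 2)
    (fun i _ => sq_nonneg _) (Finset.mem_univ i)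
  simpa [Real.norm_eq_abs, sq_abs] using this

lemma p1_norm_le (w : Wsp N) : ‖p1 N w‖ ≤ ‖w‖ := by
  apply pi_norm_le_iff_of_nonneg (norm_nonneg w) |>.2
  intro j; exact euclid_coord_le w (Sum.inl j)

lemma p2_norm_le (w : Wsp N) : ‖p2 N w‖ ≤ ‖w‖ := by
  apply pi_norm_le_iff_of_nonneg (norm_nonneg w) |>.2
  intro j; exact euclid_coord_le w (Sum.inr j)

lemma wnorm_le (w : Wsp N) :
    ‖w‖ ≤ (2 * N + 1 : ℝ) * ((1 + ‖p1 N w‖) * (1 + ‖p2 N w‖)) := by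
  set s1 := ‖p1 N w‖ with hs1
  set s2 := ‖p2 N w‖ with hs2
  have hs1' : 0 ≤ s1 := norm_nonneg _
  have hs2' : 0 ≤ s2 := norm_nonneg _
  have hB : (0:ℝ) ≤ (2 * N + 1 : ℝ) * ((1 + s1) * (1 + s2)) := by positivity
  rw [EuclideanSpace.norm_eq]
  rw [show ((2 * N + 1 : ℝ) * ((1 + s1) * (1 + s2)))
      = Real.sqrt (((2 * N + 1 : ℝ) * ((1 + s1) * (1 + s2))) ^ 2) from
    (Real.sqrt_sq hB).symm]
  apply Real.sqrt_le_sqrt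
  have hsum : ∑ i : Fin (2*N) ⊕ Fin (2*N), ‖w i‖ ^ 2
      ≤ (2*N : ℝ) * s1 ^ 2 + (2*N : ℝ) * s2 ^ 2 := by
    rw [Fintype.sum_sum_type]
    have h1 : ∑ j : Fin (2*N), ‖w (Sum.inl j)‖ ^ 2 ≤ (2*N : ℝ) * s1 ^ 2 := by
      calc ∑ j : Fin (2*N), ‖w (Sum.inl j)‖ ^ 2 ≤ ∑ _j : Fin (2*N), s1 ^ 2 := by
            apply Finset.sum_le_sum
            intro j _
            have : ‖w (Sum.inl j)‖ ≤ s1 := by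
              rw [hs1]; exact norm_le_pi_norm (p1 N w) j
            exact pow_le_pow_left₀ (norm_nonneg _) this 2
        _ = (2*N : ℝ) * s1 ^ 2 := by simp [Finset.sum_const, nsmul_eq_mul]
    have h2 : ∑ j : Fin (2*N), ‖w (Sum.inr j)‖ ^ 2 ≤ (2*N : ℝ) * s2 ^ 2 := by
      calc ∑ j : Fin (2*N), ‖w (Sum.inr j)‖ ^ 2 ≤ ∑ _j : Fin (2*N), s2 ^ 2 := by
            apply Finset.sum_le_sum
            intro j _
            have : ‖w (Sum.inr j)‖ ≤ s2 := by
              rw [hs2]; exact norm_le_pi_norm (p2 N w) j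
            exact pow_le_pow_left₀ (norm_nonneg _) this 2
        _ = (2*N : ℝ) * s2 ^ 2 := by simp [Finset.sum_const, nsmul_eq_mul]
    exact add_le_add h1 h2
  refine hsum.trans ?_
  have hn : (0:ℝ) ≤ (2*N : ℝ) := by positivity
  have hq2 : s1 ^ 2 ≤ ((1+s1)*(1+s2)) ^ 2 := by nlinarith
  have hq3 : s2 ^ 2 ≤ ((1+s1)*(1+s2)) ^ 2 := by nlinarith
  nlinarith [mul_le_mul_of_nonneg_left hq2 hn, mul_le_mul_of_nonneg_left hq3 hn,
    mul_nonneg (mul_nonneg hn hn) (sq_nonneg ((1+s1)*(1+s2))), sq_nonneg ((1+s1)*(1+s2))]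

variable {N}

/-- Tensor product of Schwartz functions. -/
def tensor (f g : 𝓢(Dm N, ℂ)) : 𝓢(Wsp N, ℂ) where
  toFun := fun w => f (p1 N w) * g (p2 N w)
  smooth' := (((f.smooth ⊤).comp (p1 N).contDiff).mul
    ((g.smooth ⊤).comp (p2 N).contDiff))
  decay' := by
    intro k n
    have hp1 : ‖p1 N‖ ≤ 1 :=
      ContinuousLinearMap.opNorm_le_bound _ zero_le_one
        (fun w => by simpa using p1_norm_le N w)
    have hp2 : ‖p2 N‖ ≤ 1 :=
      ContinuousLinearMap.opNorm_le_bound _ zero_le_one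
        (fun w => by simpa using p2_norm_le N w)
    set A := ((Finset.Iic (k,n)).sup (fun m => SchwartzMap.seminorm ℝ m.1 m.2)) f with hA
    set Bg := ((Finset.Iic (k,n)).sup (fun m => SchwartzMap.seminorm ℝ m.1 m.2)) g with hB
    have hA0 : 0 ≤ A := by rw [hA]; exact apply_nonneg _ f
    have hB0 : 0 ≤ Bg := by rw [hB]; exact apply_nonneg _ g
    refine ⟨(2*N+1:ℝ)^k * ((2^k * A) * (2^k * Bg)) * 2^n, fun w => ?_⟩
    -- convenient notation
    have hcf : ∀ i, i ≤ n → ‖iteratedFDeriv ℝ i (⇑f ∘ ⇑(p1 N)) w‖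
        ≤ ‖iteratedFDeriv ℝ i (⇑f) (p1 N w)‖ := by
      intro i hi
      rw [ContinuousLinearMap.iteratedFDeriv_comp_right (p1 N) (f.smooth ⊤) w
        (by exact_mod_cast le_top)]
      refine (ContinuousMultilinearMap.norm_compContinuousLinearMap_le _ _).trans ?_
      calc ‖iteratedFDeriv ℝ i (⇑f) (p1 N w)‖ * ∏ _j : Fin i, ‖p1 N‖
          ≤ ‖iteratedFDeriv ℝ i (⇑f) (p1 N w)‖ * 1 := by
            apply mul_le_mul_of_nonneg_left _ (norm_nonneg _)
            calc ∏ _j : Fin i, ‖p1 N‖ ≤ ∏ _j : Fin i, (1:ℝ) :=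
                  Finset.prod_le_prod (fun _ _ => norm_nonneg _) (fun _ _ => hp1)
              _ = 1 := by simp
        _ = _ := mul_one _
    have hcg : ∀ i, i ≤ n → ‖iteratedFDeriv ℝ i (⇑g ∘ ⇑(p2 N)) w‖
        ≤ ‖iteratedFDeriv ℝ i (⇑g) (p2 N w)‖ := by
      intro i hi
      rw [ContinuousLinearMap.iteratedFDeriv_comp_right (p2 N) (g.smooth ⊤) w
        (by exact_mod_cast le_top)]
      refine (ContinuousMultilinearMap.norm_compContinuousLinearMap_le _ _).trans ?_
      calc ‖iteratedFDeriv ℝ i (⇑g) (p2 N w)‖ * ∏ _j : Fin i, ‖p2 N‖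
          ≤ ‖iteratedFDeriv ℝ i (⇑g) (p2 N w)‖ * 1 := by
            apply mul_le_mul_of_nonneg_left _ (norm_nonneg _)
            calc ∏ _j : Fin i, ‖p2 N‖ ≤ ∏ _j : Fin i, (1:ℝ) :=
                  Finset.prod_le_prod (fun _ _ => norm_nonneg _) (fun _ _ => hp2)
              _ = 1 := by simp
        _ = _ := mul_one _
    have hmul := norm_iteratedFDeriv_mul_le (𝕜 := ℝ)
      (f := ⇑f ∘ ⇑(p1 N)) (g := ⇑g ∘ ⇑(p2 N)) (N := (∞ : WithTop ℕ∞))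
      ((f.smooth ⊤).comp (p1 N).contDiff) ((g.smooth ⊤).comp (p2 N).contDiff)
      w (by exact_mod_cast le_top) (n := n)
    have hwk : ‖w‖ ^ k ≤ ((2*N+1:ℝ) * ((1 + ‖p1 N w‖) * (1 + ‖p2 N w‖))) ^ k :=
      pow_le_pow_left₀ (norm_nonneg w) (wnorm_le N w) k
    calc ‖w‖ ^ k * ‖iteratedFDeriv ℝ n (fun w => f (p1 N w) * g (p2 N w)) w‖
        = ‖w‖ ^ k * ‖iteratedFDeriv ℝ n (fun w => (⇑f ∘ ⇑(p1 N)) w * (⇑g ∘ ⇑(p2 N)) w) w‖ := rfl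
      _ ≤ ((2*N+1:ℝ) * ((1 + ‖p1 N w‖) * (1 + ‖p2 N w‖))) ^ k *
          ∑ i ∈ Finset.range (n+1), (n.choose i : ℝ) *
            ‖iteratedFDeriv ℝ i (⇑f ∘ ⇑(p1 N)) w‖ *
            ‖iteratedFDeriv ℝ (n - i) (⇑g ∘ ⇑(p2 N)) w‖ := by
          apply mul_le_mul hwk hmul (norm_nonneg _) (by positivity)
      _ = ∑ i ∈ Finset.range (n+1), (n.choose i : ℝ) * (2*N+1:ℝ)^k *
            ((1 + ‖p1 N w‖)^k * ‖iteratedFDeriv ℝ i (⇑f ∘ ⇑(p1 N)) w‖) *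
            ((1 + ‖p2 N w‖)^k * ‖iteratedFDeriv ℝ (n - i) (⇑g ∘ ⇑(p2 N)) w‖) := by
          rw [Finset.mul_sum]
          congr 1; funext i
          rw [mul_pow, mul_pow]
          ring
      _ ≤ ∑ i ∈ Finset.range (n+1), (n.choose i : ℝ) * (2*N+1:ℝ)^k *
            (2^k * A) * (2^k * Bg) := by
          apply Finset.sum_le_sum
          intro i hi
          rw [Finset.mem_range] at hi
          have hi' : i ≤ n := by omega
          have e1 : (1 + ‖p1 N w‖)^k * ‖iteratedFDeriv ℝ i (⇑f ∘ ⇑(p1 N)) w‖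
              ≤ 2^k * A := by
            calc (1 + ‖p1 N w‖)^k * ‖iteratedFDeriv ℝ i (⇑f ∘ ⇑(p1 N)) w‖
                ≤ (1 + ‖p1 N w‖)^k * ‖iteratedFDeriv ℝ i (⇑f) (p1 N w)‖ := by
                  apply mul_le_mul_of_nonneg_left (hcf i hi') (by positivity)
              _ ≤ 2^k * A := by
                  rw [hA]
                  exact one_add_le_sup_seminorm_apply (𝕜 := ℝ) (m := (k,n)) le_rfl hi' f (p1 N w)
          have e2 : (1 + ‖p2 N w‖)^k * ‖iteratedFDeriv ℝ (n-i) (⇑g ∘ ⇑(p2 N)) w‖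
              ≤ 2^k * Bg := by
            calc (1 + ‖p2 N w‖)^k * ‖iteratedFDeriv ℝ (n-i) (⇑g ∘ ⇑(p2 N)) w‖
                ≤ (1 + ‖p2 N w‖)^k * ‖iteratedFDeriv ℝ (n-i) (⇑g) (p2 N w)‖ := by
                  apply mul_le_mul_of_nonneg_left (hcg (n-i) (by omega)) (by positivity)
              _ ≤ 2^k * Bg := by
                  rw [hB]
                  exact one_add_le_sup_seminorm_apply (𝕜 := ℝ) (m := (k,n)) le_rfl (by omega) g (p2 N w)
          have hnn : (0:ℝ) ≤ (n.choose i : ℝ) * (2*N+1:ℝ)^k := by positivity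
          calc (n.choose i : ℝ) * (2*N+1:ℝ)^k *
                ((1 + ‖p1 N w‖)^k * ‖iteratedFDeriv ℝ i (⇑f ∘ ⇑(p1 N)) w‖) *
                ((1 + ‖p2 N w‖)^k * ‖iteratedFDeriv ℝ (n - i) (⇑g ∘ ⇑(p2 N)) w‖)
              ≤ (n.choose i : ℝ) * (2*N+1:ℝ)^k * (2^k * A) *
                ((1 + ‖p2 N w‖)^k * ‖iteratedFDeriv ℝ (n - i) (⇑g ∘ ⇑(p2 N)) w‖) := by
                apply mul_le_mul_of_nonneg_right (mul_le_mul_of_nonneg_left e1 hnn) (by positivity)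
            _ ≤ (n.choose i : ℝ) * (2*N+1:ℝ)^k * (2^k * A) * (2^k * Bg) := by
                apply mul_le_mul_of_nonneg_left e2 (by positivity)
      _ = (∑ i ∈ Finset.range (n+1), (n.choose i : ℝ)) * ((2*N+1:ℝ)^k * ((2^k*A) * (2^k*Bg))) := by
          rw [Finset.sum_mul]
          congr 1; funext i; ring
      _ = (2*N+1:ℝ)^k * ((2^k * A) * (2^k * Bg)) * 2^n := by
          have hch : ∑ i ∈ Finset.range (n+1), (n.choose i : ℝ) = 2^n := by
            exact_mod_cast Nat.sum_range_choose n
          rw [hch]; ring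

@[simp] lemma tensor_apply (f g : 𝓢(Dm N, ℂ)) (w : Wsp N) :
    tensor f g w = f (p1 N w) * g (p2 N w) := rfl


end Moyal
namespace Moyal

variable (N : ℕ)

lemma symp_add (x y : Fin (2*N) → ℝ) : symp N (x + y) = symp N x + symp N y := by
  funext j
  simp only [symp, Pi.add_apply]
  split <;> ring

lemma symp_smul (r : ℝ) (x : Fin (2*N) → ℝ) : symp N (r • x) = r • symp N x := by
  funext j
  simp only [symp, Pi.smul_apply, smul_eq_mul]
  split <;> ring

def sympCLM : Dm N →L[ℝ] Dm N :=
  LinearMap.toContinuousLinearMap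
    { toFun := symp N
      map_add' := symp_add N
      map_smul' := symp_smul N }

@[simp] lemma sympCLM_apply (x : Dm N) : sympCLM N x = symp N x := rfl

def dotCLM : Dm N →L[ℝ] Dm N →L[ℝ] ℝ :=
  (innerSL ℝ (E := EuclideanSpace ℝ (Fin (2*N)))).bilinearComp
    ((EuclideanSpace.equiv (Fin (2*N)) ℝ).symm : Dm N →L[ℝ] EuclideanSpace ℝ (Fin (2*N)))
    ((EuclideanSpace.equiv (Fin (2*N)) ℝ).symm : Dm N →L[ℝ] EuclideanSpace ℝ (Fin (2*N)))

@[simp] lemma dotCLM_apply (x y : Dm N) : dotCLM N x y = dotR x y := by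
  simp only [dotCLM, ContinuousLinearMap.bilinearComp_apply, innerSL_apply_apply]
  rw [PiLp.inner_apply]
  simp [RCLike.inner_apply, dotR, mul_comm]

def Bform (c : ℝ) : Wsp N →L[ℝ] Wsp N →L[ℝ] ℝ :=
  c • (dotCLM N).bilinearComp (p1 N) ((sympCLM N).comp (p2 N))

@[simp] lemma Bform_apply (c : ℝ) (w w' : Wsp N) :
    Bform N c w w' = c * dotR (p1 N w) (symp N (p2 N w')) := by
  simp [Bform]

lemma htg_phase (c : ℝ) :
    Function.HasTemperateGrowth (fun w : Wsp N => Complex.exp (Complex.I * (Bform N c w w))) :=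
  Function.HasTemperateGrowth.expI (htg_bilin_diag (Bform N c))

variable {N}

def kern (c : ℝ) (f g : 𝓢(Dm N, ℂ)) : 𝓢(Wsp N, ℂ) :=
  bilinLeftCLM (ContinuousLinearMap.mul ℝ ℂ) (htg_phase N c) (tensor f g)

lemma kern_apply (c : ℝ) (f g : 𝓢(Dm N, ℂ)) (w : Wsp N) :
    kern c f g w = f (p1 N w) * g (p2 N w) * Complex.exp (Complex.I * (Bform N c w w)) := rfl

variable (N)

def Lmap (a : ℝ) : Dm N →L[ℝ] Wsp N :=
  LinearMap.toContinuousLinearMap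
    { toFun := fun x => (WithLp.toLp 2 (fun i => Sum.elim (fun j => a * symp N x j)
        (fun j => -(a * symp N x j)) i) : EuclideanSpace ℝ (Fin (2*N) ⊕ Fin (2*N)))
      map_add' := by
        intro x y
        ext i
        cases i <;> simp [symp_add] <;> ring
      map_smul' := by
        intro r x
        ext i
        cases i <;> simp [symp_smul] <;> ring }

@[simp] lemma Lmap_apply_inl (a : ℝ) (x : Dm N) (j : Fin (2*N)) :
    Lmap N a x (Sum.inl j) = a * symp N x j := rfl

@[simp] lemma Lmap_apply_inr (a : ℝ) (x : Dm N) (j : Fin (2*N)) :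
    Lmap N a x (Sum.inr j) = -(a * symp N x j) := rfl

lemma Lmap_upper {a : ℝ} (ha : 0 < a) (x : Dm N) :
    ‖x‖ ≤ a⁻¹ * (1 + ‖Lmap N a x‖) ^ 1 := by
  have key : ∀ j : Fin (2*N), ‖x j‖ ≤ a⁻¹ * ‖Lmap N a x‖ := by
    intro j
    by_cases hj : (j : ℕ) < N
    · -- use coordinate inl (iHi ⟨j, hj⟩)
      set j' : Fin N := ⟨(j : ℕ), hj⟩ with hj'
      have hlo : iLo N j' = j := by ext; simp [iLo, hj']
      have hval : symp N x (iHi N j') = - x j := by rw [symp_iHi, hlo]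
      have h1 : ‖Lmap N a x (Sum.inl (iHi N j'))‖ ≤ ‖Lmap N a x‖ :=
        euclid_coord_le _ _
      rw [Lmap_apply_inl, hval] at h1
      have : a * ‖x j‖ ≤ ‖Lmap N a x‖ := by
        calc a * ‖x j‖ = ‖a * (- x j)‖ := by
              rw [norm_mul]
              simp [abs_of_pos ha, Real.norm_eq_abs]
          _ ≤ ‖Lmap N a x‖ := h1
      calc ‖x j‖ = a⁻¹ * (a * ‖x j‖) := by field_simp
        _ ≤ a⁻¹ * ‖Lmap N a x‖ := by
            apply mul_le_mul_of_nonneg_left this (by positivity)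
    · set j' : Fin N := ⟨(j : ℕ) - N, by have := j.isLt; omega⟩ with hj'
      have hhi : iHi N j' = j := by ext; simp only [iHi, hj', Fin.val_mk]; omega
      have hval : symp N x (iLo N j') = x j := by rw [symp_iLo, hhi]
      have h1 : ‖Lmap N a x (Sum.inl (iLo N j'))‖ ≤ ‖Lmap N a x‖ :=
        euclid_coord_le _ _
      rw [Lmap_apply_inl, hval] at h1
      have : a * ‖x j‖ ≤ ‖Lmap N a x‖ := by
        calc a * ‖x j‖ = ‖a * x j‖ := by
              rw [norm_mul]
              simp [abs_of_pos ha, Real.norm_eq_abs]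
          _ ≤ ‖Lmap N a x‖ := h1
      calc ‖x j‖ = a⁻¹ * (a * ‖x j‖) := by field_simp
        _ ≤ a⁻¹ * ‖Lmap N a x‖ := by
            apply mul_le_mul_of_nonneg_left this (by positivity)
  have h0 : (0:ℝ) ≤ a⁻¹ * ‖Lmap N a x‖ := by positivity
  have := (pi_norm_le_iff_of_nonneg h0).2 key
  refine this.trans ?_
  have h1 : ‖Lmap N a x‖ ≤ 1 + ‖Lmap N a x‖ := by linarith
  calc a⁻¹ * ‖Lmap N a x‖ ≤ a⁻¹ * (1 + ‖Lmap N a x‖) := by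
        apply mul_le_mul_of_nonneg_left h1 (by positivity)
    _ = a⁻¹ * (1 + ‖Lmap N a x‖) ^ 1 := by ring

variable {N}

/-- The Moyal product as a Schwartz map. -/
def moyalS (θ : ℝ) (hθ : 0 < θ) (f g : 𝓢(Dm N, ℂ)) : 𝓢(Dm N, ℂ) :=
  ((Real.pi * θ) ^ (2 * N))⁻¹ •
    (compCLM ℝ (g := ⇑(Lmap N (1 / (Real.pi * θ))))
      (Lmap N (1 / (Real.pi * θ))).hasTemperateGrowth
      ⟨1, Real.pi * θ, fun x => by
        have h : (0:ℝ) < 1 / (Real.pi * θ) := by positivity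
        have h2 := Lmap_upper N h x
        rwa [show (1 / (Real.pi * θ))⁻¹ = Real.pi * θ by rw [one_div, inv_inv]] at h2⟩)
    (fourierTransformCLM ℝ (kern (2 / θ) f g))

lemma moyalS_apply (θ : ℝ) (hθ : 0 < θ) (f g : 𝓢(Dm N, ℂ)) (x : Dm N) :
    moyalS θ hθ f g x =
      (((Real.pi * θ) ^ (2 * N))⁻¹ : ℝ) •
        (𝓕 (⇑(kern (2 / θ) f g)) (Lmap N (1 / (Real.pi * θ)) x)) := rfl

end Moyal
namespace Moyal

variable {N : ℕ}

def prodEquiv (N : ℕ) : (Dm N × Dm N) ≃ᵐ Wsp N :=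
  (MeasurableEquiv.sumPiEquivProdPi (fun _ : Fin (2*N) ⊕ Fin (2*N) => ℝ)).symm.trans
    (MeasurableEquiv.toLp 2 (Fin (2*N) ⊕ Fin (2*N) → ℝ))

lemma prodEquiv_mp (N : ℕ) : MeasurePreserving (prodEquiv N) volume volume := by
  have h1 := MeasureTheory.volume_measurePreserving_sumPiEquivProdPi_symm
    (fun _ : Fin (2*N) ⊕ Fin (2*N) => ℝ)
  have h2 := (EuclideanSpace.volume_preserving_symm_measurableEquiv_toLp
    (Fin (2*N) ⊕ Fin (2*N))).symm
  exact h2.comp h1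

lemma prodEquiv_inl (y z : Dm N) (j : Fin (2*N)) :
    prodEquiv N (y, z) (Sum.inl j) = y j := rfl

lemma prodEquiv_inr (y z : Dm N) (j : Fin (2*N)) :
    prodEquiv N (y, z) (Sum.inr j) = z j := rfl

lemma p1_prodEquiv (y z : Dm N) : p1 N (prodEquiv N (y, z)) = y := rfl
lemma p2_prodEquiv (y z : Dm N) : p2 N (prodEquiv N (y, z)) = z := rfl

lemma key_eq (θ : ℝ) (hθ : 0 < θ) (f g : 𝓢(Dm N, ℂ)) (x : Dm N) :
    𝓕 (⇑(kern (2 / θ) f g)) (Lmap N (1 / (Real.pi * θ)) x) =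
      ∫ y : Dm N, ∫ z : Dm N,
        f y * g z *
          Complex.exp (2 * Complex.I / (θ : ℂ) * ((dotR (x - y) (symp N (x - z)) : ℝ) : ℂ)) := by
  rw [Real.fourier_eq]
  set ξ := Lmap N (1 / (Real.pi * θ)) x with hξ
  have hK : Integrable (fun w : Wsp N => 𝐞 (-⟪w, ξ⟫) • kern (2/θ) f g w) volume :=
    (Real.fourierIntegral_convergent_iff ξ).2 (kern (2/θ) f g).integrable
  rw [← MeasurePreserving.integral_comp' (prodEquiv_mp N)]
  have hK2 : Integrable
      (fun p : Dm N × Dm N => 𝐞 (-⟪(prodEquiv N p : Wsp N), ξ⟫) • kern (2/θ) f g (prodEquiv N p))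
      ((volume : Measure (Dm N)).prod (volume : Measure (Dm N))) := by
    have := ((prodEquiv_mp N).integrable_comp_emb (prodEquiv N).measurableEmbedding).2 hK
    rwa [MeasureTheory.Measure.volume_eq_prod (Dm N) (Dm N)] at this
  rw [MeasureTheory.Measure.volume_eq_prod (Dm N) (Dm N), MeasureTheory.integral_prod _ hK2]
  congr 1
  funext y
  congr 1
  funext z
  -- pointwise computation
  have hπ : (Real.pi : ℂ) ≠ 0 := Complex.ofReal_ne_zero.2 Real.pi_ne_zero
  have hθ' : (θ : ℂ) ≠ 0 := Complex.ofReal_ne_zero.2 hθ.ne'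
  have hinner : ⟪(prodEquiv N (y, z) : Wsp N), ξ⟫
      = (1/(Real.pi * θ)) * (dotR y (symp N x) - dotR z (symp N x)) := by
    rw [PiLp.inner_apply]
    simp only [RCLike.inner_apply, starRingEnd_apply, star_trivial]
    rw [Fintype.sum_sum_type]
    simp only [prodEquiv_inl, prodEquiv_inr, hξ, Lmap_apply_inl, Lmap_apply_inr]
    rw [dotR, dotR, mul_sub, Finset.mul_sum, Finset.mul_sum, sub_eq_add_neg,
      ← Finset.sum_neg_distrib]
    congr 1 <;> (apply Finset.sum_congr rfl; intros; ring)
  have hkern : kern (2/θ) f g (prodEquiv N (y, z))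
      = f y * g z * Complex.exp (Complex.I * ((2/θ) * dotR y (symp N z) : ℝ)) := by
    rw [kern_apply, Bform_apply, p1_prodEquiv, p2_prodEquiv]
  rw [hkern, hinner, Circle.smul_def, Real.fourierChar_apply, smul_eq_mul]
  rw [show Complex.exp (↑(2 * Real.pi * -((1/(Real.pi * θ)) * (dotR y (symp N x) - dotR z (symp N x)))) * Complex.I)
        * (f y * g z * Complex.exp (Complex.I * ((2/θ) * dotR y (symp N z) : ℝ)))
      = f y * g z *
        (Complex.exp (↑(2 * Real.pi * -((1/(Real.pi * θ)) * (dotR y (symp N x) - dotR z (symp N x)))) * Complex.I)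
          * Complex.exp (Complex.I * ((2/θ) * dotR y (symp N z) : ℝ))) by ring,
    ← Complex.exp_add]
  congr 1
  rw [dot_expand]
  congr 1
  push_cast
  field_simp
  ring

end Moyal

open Moyal in
/-- the Moyal product of two Schwartz functions on `ℝ^{2N}`
is again a Schwartz function. -/
theorem moyal_of_schwartz_is_schwartz (N : ℕ) (θ : ℝ) (hθ : 0 < θ)
    (f g : SchwartzMap ((Fin (2 * N)) → ℝ) ℂ) :
    ∃ h : SchwartzMap ((Fin (2 * N)) → ℝ) ℂ, ∀ x, h x = moyal N θ (⇑f) (⇑g) x := by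
  refine ⟨Moyal.moyalS θ hθ f g, fun x => ?_⟩
  rw [Moyal.moyalS_apply θ hθ f g x, Moyal.key_eq θ hθ f g x, moyal, Complex.real_smul]
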